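/- arXiv:1712.02755 — 2 statements merged into one kernel-verified Lean document; each statement's English description precedes it below -/
import Mathlib

section
/- Let λ be a partition of n and l a natural number ≥ 2. The number of cells in the Young diagram of λ whose hook length is divisible by l equals the l-weight of λ (the number of l-hooks removed to reach the l-core of λ). -/
/-- Beta-set (first-column hook lengths with padding) of a partition given as a
weakly decreasing list of parts: `b_i = λ_i + (r - 1 - i)` (0-indexed). -/
def betaSet (L : List ℕ) : List ℕ :=
  (List.range L.length).map (fun i => L.getD i 0 + (L.length - 1 - i))

/-- The `l`-weight of a partition: the number of rim `l`-hooks removed to reach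
the `l`-core, computed on the `l`-abacus as the total number of single-runner
moves needed to push all beads up. -/
def lWeight (l : ℕ) (L : List ℕ) : ℕ :=
  ((betaSet L).map (· / l)).sum -
    ∑ j ∈ Finset.range l, (((betaSet L).filter (fun b => b % l = j)).length).choose 2

/-- Beta-set of the `l`-core: on each runner, push all beads to the lowest positions. -/
def lCoreBeta (l : ℕ) (L : List ℕ) : List ℕ :=
  (List.range l).flatMap (fun j =>
    (List.range (((betaSet L).filter (fun b => b % l = j)).length)).map (fun k => j + l * k))

/-- The `l`-core of a partition, recovered from the pushed-up beta-set. -/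
def lCore (l : ℕ) (L : List ℕ) : List ℕ :=
  (((lCoreBeta l L).mergeSort (fun a b => b ≤ a)).mapIdx
    (fun i b => b - (L.length - 1 - i))).filter (fun a => 0 < a)

/-- Hook length of the cell in row `i`, column `j` (both 0-indexed):
arm + leg + 1. -/
def hookLen (L : List ℕ) (i j : ℕ) : ℕ :=
  (L.getD i 0 - j) + ((L.drop (i + 1)).filter (fun a => j < a)).length

namespace HW

def bb (L : List ℕ) (i : ℕ) : ℕ := L.getD i 0 + (L.length - 1 - i)

def ff (L : List ℕ) (i j : ℕ) : ℕ :=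
  j + ((Finset.Ico (i + 1) L.length).filter (fun k => L.getD k 0 ≤ j)).card

lemma bridge_filter (n : ℕ) (g : ℕ → ℕ) (p : ℕ → Bool) :
    (((List.range n).map g).filter p).length
      = ((Finset.range n).filter (fun i => p (g i) = true)).card := by
  rw [List.filter_map, List.length_map, ← List.countP_eq_length_filter, Finset.card_filter]
  induction n with
  | zero => simp
  | succ n ih =>
      rw [List.range_succ, List.countP_append, Finset.sum_range_succ, ih]
      by_cases hc : p (g n) <;> simp [List.countP, List.countP.go, hc]

lemma bridge_sum (n : ℕ) (g : ℕ → ℕ) :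
    ((List.range n).map g).sum = ∑ i ∈ Finset.range n, g i := by
  induction n with
  | zero => simp
  | succ n ih => rw [List.range_succ, Finset.sum_range_succ, ← ih]; simp

lemma self_map (M : List ℕ) : M = (List.range M.length).map (fun s => M.getD s 0) := by
  apply List.ext_getElem
  · simp
  · intro i h1 h2
    simp [List.getD_eq_getElem?_getD, List.getElem?_eq_getElem, h1]

lemma getD_anti {L : List ℕ} (h : L.Pairwise (· ≥ ·)) {i k : ℕ} (hik : i ≤ k)
    (hk : k < L.length) : L.getD k 0 ≤ L.getD i 0 := by
  rcases eq_or_lt_of_le hik with rfl | hik'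
  · exact le_refl _
  · have := List.Pairwise.rel_get_of_lt h (a := ⟨i, lt_trans hik' hk⟩) (b := ⟨k, hk⟩) hik'
    simpa [List.getD_eq_getElem?_getD, List.getElem?_eq_getElem, hk, lt_trans hik' hk] using this

lemma bb_strict {L : List ℕ} (h : L.Pairwise (· ≥ ·)) {i k : ℕ} (hik : i < k)
    (hk : k < L.length) : bb L k < bb L i := by
  have h1 : L.getD k 0 ≤ L.getD i 0 := getD_anti h (le_of_lt hik) hk
  unfold bb; omega

lemma getD_drop (L : List ℕ) (n s : ℕ) : (L.drop n).getD s 0 = L.getD (n + s) 0 := by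
  rcases lt_or_ge (n + s) L.length with h | h
  · have hs : s < (L.drop n).length := by rw [List.length_drop]; omega
    rw [List.getD_eq_getElem _ _ hs, List.getD_eq_getElem _ _ h]
    exact List.getElem_drop ..
  · rw [List.getD_eq_default, List.getD_eq_default] <;> (try rw [List.length_drop]) <;> omega

lemma drop_filter_card (L : List ℕ) (i : ℕ) (p : ℕ → Bool) :
    ((L.drop (i+1)).filter p).length
      = ((Finset.Ico (i+1) L.length).filter (fun k => p (L.getD k 0) = true)).card := by
  conv_lhs => rw [self_map (L.drop (i+1))]
  rw [bridge_filter]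
  refine Finset.card_bij' (fun s _ => (i+1) + s) (fun k _ => k - (i+1)) ?_ ?_ ?_ ?_
  · intro s hs
    simp only [Finset.mem_filter, Finset.mem_range, List.length_drop] at hs
    simp only [Finset.mem_filter, Finset.mem_Ico]
    refine ⟨by omega, ?_⟩
    rw [← getD_drop]; exact hs.2
  · intro k hk
    simp only [Finset.mem_filter, Finset.mem_Ico] at hk
    simp only [Finset.mem_filter, Finset.mem_range, List.length_drop]
    refine ⟨by omega, ?_⟩
    rw [getD_drop]
    have h : i + 1 + (k - (i+1)) = k := by omega
    rw [h]; exact hk.2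
  · intro s hs; omega
  · intro k hk
    simp only [Finset.mem_filter, Finset.mem_Ico] at hk
    omega

lemma card_mod_filter {l : ℕ} (hl : 0 < l) (n : ℕ) :
    ((Finset.range n).filter (fun x => x % l = n % l)).card = n / l := by
  rw [← Finset.card_range (n / l)]
  refine Finset.card_bij' (fun x _ => x / l) (fun t _ => n % l + l * t) ?_ ?_ ?_ ?_
  · intro x hx
    simp only [Finset.mem_filter, Finset.mem_range] at hx
    simp only [Finset.mem_range]
    have hdvd : l ∣ n - x := (Nat.modEq_iff_dvd' (le_of_lt hx.1)).mp hx.2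
    have hle : x + l ≤ n := by
      have := Nat.le_of_dvd (by omega) hdvd
      omega
    have h2 : (x + l) / l ≤ n / l := Nat.div_le_div_right hle
    rw [Nat.add_div_right _ hl] at h2
    omega
  · intro t ht
    simp only [Finset.mem_range] at ht
    simp only [Finset.mem_filter, Finset.mem_range]
    constructor
    · have h2 := Nat.div_add_mod n l
      have h3 : l * (t + 1) ≤ l * (n / l) := Nat.mul_le_mul_left l (by omega)
      rw [Nat.mul_add] at h3
      omega
    · rw [Nat.add_mul_mod_self_left, Nat.mod_mod_of_dvd _ (dvd_refl l)]
  · intro x hx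
    simp only [Finset.mem_filter, Finset.mem_range] at hx
    have h1 := Nat.div_add_mod x l
    omega
  · intro t ht
    rw [Nat.add_mul_div_left _ _ hl, Nat.div_eq_of_lt (Nat.mod_lt _ hl)]
    omega

lemma hook_eq {L : List ℕ} (i j : ℕ) (hi : i < L.length) (hj : j < L.getD i 0) :
    hookLen L i j + ff L i j = bb L i := by
  unfold hookLen ff bb
  rw [drop_filter_card]
  have hcompl := Finset.card_filter_add_card_filter_not
    (s := Finset.Ico (i+1) L.length) (p := fun k => j < L.getD k 0)
  have hco : (Finset.Ico (i+1) L.length).filter (fun k => ¬ j < L.getD k 0)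
      = (Finset.Ico (i+1) L.length).filter (fun k => L.getD k 0 ≤ j) := by
    apply Finset.filter_congr; intro x _; simp [not_lt]
  have hde : (Finset.Ico (i+1) L.length).filter (fun k => decide (j < L.getD k 0) = true)
      = (Finset.Ico (i+1) L.length).filter (fun k => j < L.getD k 0) := by
    apply Finset.filter_congr; intro x _; simp
  rw [hde]
  rw [hco, Nat.card_Ico] at hcompl
  omega

lemma ff_mono {L : List ℕ} (i : ℕ) {j j' : ℕ} (h : j < j') : ff L i j < ff L i j' := by
  unfold ff
  have := Finset.card_le_card (Finset.monotone_filter_right (s := Finset.Ico (i+1) L.length)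
    (p := fun k => L.getD k 0 ≤ j) (q := fun k => L.getD k 0 ≤ j') (fun k _ hk => le_trans hk (le_of_lt h)))
  omega

lemma ff_ne_bb {L : List ℕ} (hs : L.Pairwise (· ≥ ·)) {i k : ℕ} (hik : i < k)
    (hk : k < L.length) (j : ℕ) : ff L i j ≠ bb L k := by
  by_cases hc : L.getD k 0 ≤ j
  · have hsub : Finset.Ico k L.length
        ⊆ (Finset.Ico (i+1) L.length).filter (fun k' => L.getD k' 0 ≤ j) := by
      intro k' hk'
      simp only [Finset.mem_Ico] at hk'
      simp only [Finset.mem_filter, Finset.mem_Ico]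
      exact ⟨⟨by omega, hk'.2⟩, le_trans (getD_anti hs hk'.1 hk'.2) hc⟩
    have hcard := Finset.card_le_card hsub
    rw [Nat.card_Ico] at hcard
    unfold ff bb
    omega
  · push_neg at hc
    have hsub : (Finset.Ico (i+1) L.length).filter (fun k' => L.getD k' 0 ≤ j)
        ⊆ Finset.Ico (k+1) L.length := by
      intro k' hk'
      simp only [Finset.mem_filter, Finset.mem_Ico] at hk'
      simp only [Finset.mem_Ico]
      refine ⟨?_, hk'.1.2⟩
      by_contra hkk
      push_neg at hkk
      have := getD_anti hs (by omega : k' ≤ k) hk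
      omega
    have hcard := Finset.card_le_card hsub
    rw [Nat.card_Ico] at hcard
    unfold ff bb
    omega

lemma hook_pos {L : List ℕ} (i j : ℕ) (hj : j < L.getD i 0) : 0 < hookLen L i j := by
  unfold hookLen; omega

lemma ff_lt {L : List ℕ} (i j : ℕ) (hi : i < L.length) (hj : j < L.getD i 0) :
    ff L i j < bb L i := by
  have h1 := hook_eq i j hi hj
  have h2 := hook_pos (L := L) i j hj
  omega

lemma dvd_iff {l : ℕ} {L : List ℕ} (i j : ℕ) (hi : i < L.length) (hj : j < L.getD i 0) :
    (l ∣ hookLen L i j) ↔ ff L i j % l = bb L i % l := by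
  have he := hook_eq (L := L) i j hi hj
  have hle : ff L i j ≤ bb L i := by omega
  have h := Nat.modEq_iff_dvd' (n := l) hle
  have hsub : bb L i - ff L i j = hookLen L i j := by omega
  rw [hsub] at h
  exact h.symm


lemma row_main {l : ℕ} (hl : 0 < l) {L : List ℕ} (hs : L.Pairwise (· ≥ ·)) {i : ℕ}
    (hi : i < L.length) :
    ((Finset.range (L.getD i 0)).filter (fun j => l ∣ hookLen L i j)).card
      + ((Finset.Ico (i+1) L.length).filter (fun k => bb L k % l = bb L i % l)).card
      = bb L i / l := by
  classical
  set r := L.length with hr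
  set a := L.getD i 0 with ha
  set B := bb L i with hB
  set S : Finset ℕ := (Finset.Ico (i+1) r).image (bb L) with hS
  have hbbinj : Set.InjOn (bb L) (Finset.Ico (i+1) r) := by
    intro x hx y hy hxy
    simp only [Finset.coe_Ico, Set.mem_Ico] at hx hy
    by_contra hne
    rcases lt_or_gt_of_ne hne with h | h
    · have := bb_strict hs h hy.2; omega
    · have := bb_strict hs h hx.2; omega
  have hffinj : Set.InjOn (ff L i) (Finset.range a) := by
    intro x _ y _ hxy
    by_contra hne
    rcases lt_or_gt_of_ne hne with h | h
    · have := ff_mono (L := L) i h; omega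
    · have := ff_mono (L := L) i h; omega
  have hScard : S.card = r - (i+1) := by
    rw [hS, Finset.card_image_of_injOn hbbinj, Nat.card_Ico]
  have hSsub : S ⊆ Finset.range B := by
    intro x hx
    rw [hS, Finset.mem_image] at hx
    obtain ⟨k, hk, rfl⟩ := hx
    rw [Finset.mem_Ico] at hk
    rw [Finset.mem_range, hB]
    exact bb_strict hs (by omega) hk.2
  have hBval : B = a + (r - 1 - i) := rfl
  have himg : (Finset.range a).image (ff L i) = Finset.range B \ S := by
    apply Finset.eq_of_subset_of_card_le
    · intro x hx
      rw [Finset.mem_image] at hx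
      obtain ⟨j, hj, rfl⟩ := hx
      rw [Finset.mem_range] at hj
      rw [Finset.mem_sdiff, Finset.mem_range]
      refine ⟨ff_lt i j hi hj, ?_⟩
      intro hmem
      rw [hS, Finset.mem_image] at hmem
      obtain ⟨k, hk, hkeq⟩ := hmem
      rw [Finset.mem_Ico] at hk
      exact ff_ne_bb hs (by omega) hk.2 j hkeq.symm
    · rw [Finset.card_sdiff_of_subset hSsub, Finset.card_image_of_injOn hffinj,
        Finset.card_range, Finset.card_range, hScard]
      omega
  have h1 : ((Finset.range a).filter (fun j => l ∣ hookLen L i j)).card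
      = ((Finset.range a).filter (fun j => ff L i j % l = B % l)).card := by
    congr 1
    apply Finset.filter_congr
    intro j hj
    rw [Finset.mem_range] at hj
    simpa using dvd_iff (l := l) i j hi hj
  have h2 : ((Finset.range a).filter (fun j => ff L i j % l = B % l)).card
      = ((Finset.range B \ S).filter (fun x => x % l = B % l)).card := by
    rw [← himg, Finset.filter_image]
    rw [Finset.card_image_of_injOn (hffinj.mono (Finset.filter_subset _ _))]
  have h3 : (Finset.range B \ S).filter (fun x => x % l = B % l)
      = (Finset.range B).filter (fun x => x % l = B % l)
        \ S.filter (fun x => x % l = B % l) := by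
    ext x
    simp only [Finset.mem_sdiff, Finset.mem_filter]
    tauto
  have h4 : (S.filter (fun x => x % l = B % l)).card
      = ((Finset.Ico (i+1) r).filter (fun k => bb L k % l = B % l)).card := by
    rw [hS, Finset.filter_image]
    rw [Finset.card_image_of_injOn (hbbinj.mono (Finset.filter_subset _ _))]
  have h5 : ((Finset.range B).filter (fun x => x % l = B % l)).card = B / l :=
    card_mod_filter hl B
  have hYsub : S.filter (fun x => x % l = B % l)
      ⊆ (Finset.range B).filter (fun x => x % l = B % l) :=
    Finset.filter_subset_filter _ hSsub
  have hYle := Finset.card_le_card hYsub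
  rw [h1, h2, h3, Finset.card_sdiff_of_subset hYsub, h5] at *
  omega

lemma pair_count (A : Finset ℕ) :
    ∑ i ∈ A, ((A.filter (fun k => i < k)).card) = A.card.choose 2 := by
  have hS : ∑ i ∈ A, ((A.filter (fun k => i < k)).card)
      = ∑ i ∈ A, ∑ k ∈ A, (if i < k then (1:ℕ) else 0) := by
    refine Finset.sum_congr rfl (fun i _ => ?_); rw [Finset.card_filter]
  have hsym : ∑ i ∈ A, ∑ k ∈ A, (if i < k then (1:ℕ) else 0)
      = ∑ i ∈ A, ∑ k ∈ A, (if k < i then (1:ℕ) else 0) := by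
    rw [Finset.sum_comm]
  have hdiag : ∑ i ∈ A, ∑ k ∈ A, (if i = k then (1:ℕ) else 0) = A.card := by
    have h1 : ∀ i ∈ A, (∑ k ∈ A, (if i = k then (1:ℕ) else 0)) = 1 := fun i hi => by
      rw [Finset.sum_ite_eq A i (fun _ => (1:ℕ)), if_pos hi]
    rw [Finset.sum_congr rfl h1]
    simp
  have htot : (∑ i ∈ A, ∑ k ∈ A, (if i < k then (1:ℕ) else 0))
      + (∑ i ∈ A, ∑ k ∈ A, (if k < i then (1:ℕ) else 0))
      + (∑ i ∈ A, ∑ k ∈ A, (if i = k then (1:ℕ) else 0)) = A.card * A.card := by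
    calc (∑ i ∈ A, ∑ k ∈ A, (if i < k then (1:ℕ) else 0))
        + (∑ i ∈ A, ∑ k ∈ A, (if k < i then (1:ℕ) else 0))
        + (∑ i ∈ A, ∑ k ∈ A, (if i = k then (1:ℕ) else 0))
        = ∑ i ∈ A, ((∑ k ∈ A, (if i < k then (1:ℕ) else 0))
            + (∑ k ∈ A, (if k < i then (1:ℕ) else 0))
            + (∑ k ∈ A, (if i = k then (1:ℕ) else 0))) := by
          rw [Finset.sum_add_distrib, Finset.sum_add_distrib]
      _ = ∑ i ∈ A, ∑ k ∈ A, ((if i < k then (1:ℕ) else 0)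
            + (if k < i then (1:ℕ) else 0) + (if i = k then (1:ℕ) else 0)) := by
          refine Finset.sum_congr rfl (fun i _ => ?_)
          rw [Finset.sum_add_distrib, Finset.sum_add_distrib]
      _ = ∑ i ∈ A, ∑ k ∈ A, 1 := by
          refine Finset.sum_congr rfl (fun i _ => Finset.sum_congr rfl (fun k _ => ?_))
          split_ifs <;> omega
      _ = A.card * A.card := by simp [Finset.sum_const, smul_eq_mul]
  rw [Nat.choose_two_right]
  have hmp : A.card * (A.card - 1) = A.card * A.card - A.card := Nat.mul_pred ..
  omega

lemma Y_total {l : ℕ} (hl : 0 < l) (g : ℕ → ℕ) (r : ℕ) :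
    ∑ i ∈ Finset.range r, ((Finset.Ico (i+1) r).filter (fun k => g k % l = g i % l)).card
      = ∑ j ∈ Finset.range l,
          (((Finset.range r).filter (fun i => g i % l = j)).card).choose 2 := by
  calc ∑ i ∈ Finset.range r, ((Finset.Ico (i+1) r).filter (fun k => g k % l = g i % l)).card
      = ∑ i ∈ Finset.range r, ∑ k ∈ Finset.range r,
          (if g k % l = g i % l then (if i < k then (1:ℕ) else 0) else 0) := by
        refine Finset.sum_congr rfl (fun i _ => ?_)
        rw [show Finset.Ico (i+1) r = (Finset.range r).filter (fun k => i < k) from by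
          ext k; simp only [Finset.mem_Ico, Finset.mem_filter, Finset.mem_range]; omega]
        rw [Finset.filter_filter, Finset.card_filter]
        refine Finset.sum_congr rfl (fun k _ => ?_)
        split_ifs <;> first | rfl | omega
    _ = ∑ i ∈ Finset.range r, ∑ j ∈ Finset.range l,
          (if g i % l = j then ∑ k ∈ Finset.range r,
            (if g k % l = j then (if i < k then (1:ℕ) else 0) else 0) else 0) := by
        refine Finset.sum_congr rfl (fun i _ => ?_)
        symm
        rw [Finset.sum_ite_eq (Finset.range l) (g i % l)
          (fun j => ∑ k ∈ Finset.range r, (if g k % l = j then (if i < k then (1:ℕ) else 0) else 0)),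
          if_pos (Finset.mem_range.mpr (Nat.mod_lt _ hl))]
    _ = ∑ j ∈ Finset.range l, ∑ i ∈ Finset.range r,
          (if g i % l = j then ∑ k ∈ Finset.range r,
            (if g k % l = j then (if i < k then (1:ℕ) else 0) else 0) else 0) := Finset.sum_comm
    _ = ∑ j ∈ Finset.range l,
          (((Finset.range r).filter (fun i => g i % l = j)).card).choose 2 := by
        refine Finset.sum_congr rfl (fun j _ => ?_)
        rw [← pair_count ((Finset.range r).filter (fun i => g i % l = j))]
        rw [Finset.sum_filter]
        refine Finset.sum_congr rfl (fun i _ => ?_)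
        split_ifs with h
        · rw [Finset.filter_filter, Finset.card_filter]
          refine Finset.sum_congr rfl (fun k _ => ?_)
          split_ifs <;> first | rfl | omega
        · rfl

end HW


/-- The number of cells of a partition whose hook length is divisible by
`l ≥ 2` equals the `l`-weight of the partition. -/
theorem statement0 (l : ℕ) (hl : 2 ≤ l) (L : List ℕ)
    (hsorted : L.Pairwise (· ≥ ·)) (hpos : ∀ a ∈ L, 0 < a) :
    ∑ i ∈ Finset.range L.length,
      ((Finset.range (L.getD i 0)).filter (fun j => l ∣ hookLen L i j)).card
      = lWeight l L := by
  have hl0 : 0 < l := by omega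
  have hrow : ∀ i ∈ Finset.range L.length,
      ((Finset.range (L.getD i 0)).filter (fun j => l ∣ hookLen L i j)).card
        + ((Finset.Ico (i+1) L.length).filter
            (fun k => HW.bb L k % l = HW.bb L i % l)).card
        = HW.bb L i / l :=
    fun i hi => HW.row_main hl0 hsorted (Finset.mem_range.mp hi)
  have hsum : (∑ i ∈ Finset.range L.length,
        ((Finset.range (L.getD i 0)).filter (fun j => l ∣ hookLen L i j)).card)
      + (∑ i ∈ Finset.range L.length,
        ((Finset.Ico (i+1) L.length).filter
          (fun k => HW.bb L k % l = HW.bb L i % l)).card)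
      = ∑ i ∈ Finset.range L.length, HW.bb L i / l := by
    rw [← Finset.sum_add_distrib]
    exact Finset.sum_congr rfl hrow
  have hY := HW.Y_total hl0 (HW.bb L) L.length
  have hbeta : betaSet L = (List.range L.length).map (HW.bb L) := rfl
  have hW1 : ((betaSet L).map (· / l)).sum = ∑ i ∈ Finset.range L.length, HW.bb L i / l := by
    rw [hbeta, List.map_map, HW.bridge_sum]
    rfl
  have hW2 : ∀ j, ((betaSet L).filter (fun b => b % l = j)).length
      = ((Finset.range L.length).filter (fun i => HW.bb L i % l = j)).card := by
    intro j
    rw [hbeta, HW.bridge_filter]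
    simp
  rw [lWeight, hW1]
  simp only [hW2]
  omega
end

section
/- Let λ be a partition of n, and define the graded dimension dim_t S^λ := (∏_{i=1}^{n} [i]_t) / (∏_{c ∈ cells(λ)} [h_c]_t), where [m]_t = (1 - t^m)/(1 - t) and h_c is the hook length of cell c. Then for every l ≥ 2, the multiplicity of the l-th cyclotomic polynomial Φ_l(t) as a factor of dim_t S^λ equals wt_l(n) - wt_l(λ) = ⌊n/l⌋ - wt_l(λ), which is a nonnegative integer. -/
open Finset Polynomial


open Polynomial

/-- The `t`-integer `[m]_t = 1 + t + ⋯ + t^{m-1}`. -/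
noncomputable def tInt (m : ℕ) : Polynomial ℚ := ∑ i ∈ Finset.range m, X ^ i

lemma sum_map_range (f : ℕ → ℕ) (n : ℕ) :
    ((List.range n).map f).sum = ∑ i ∈ Finset.range n, f i := by
  induction n with
  | zero => simp
  | succ n ih => rw [List.range_succ, Finset.sum_range_succ]; simp [ih]

lemma length_filter_eq (M : List ℕ) (p : ℕ → Bool) :
    (M.filter p).length
      = ((Finset.range M.length).filter (fun k => p (M.getD k 0) = true)).card := by
  induction M with
  | nil => simp
  | cons a M ih =>
      rw [List.filter_cons]
      rw [Finset.card_filter, List.length_cons, Finset.sum_range_succ']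
      simp only [List.getD_cons_succ, List.getD_cons_zero, List.length_cons]
      rw [← Finset.card_filter]
      by_cases h : p a
      · simp [h, ih]
      · simp [h, ih]

lemma list_sum_eq (M : List ℕ) : M.sum = ∑ i ∈ Finset.range M.length, M.getD i 0 := by
  induction M with
  | nil => simp
  | cons a M ih =>
      rw [List.length_cons, Finset.sum_range_succ']
      simp [ih, List.getD_cons_succ]
      ring

lemma getD_drop (M : List ℕ) (i j : ℕ) : (M.drop i).getD j 0 = M.getD (i + j) 0 := by
  rw [List.getD_eq_getElem?_getD, List.getD_eq_getElem?_getD, List.getElem?_drop]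

def bb (L : List ℕ) (i : ℕ) : ℕ := L.getD i 0 + (L.length - 1 - i)

lemma lam_anti {L : List ℕ} (hs : L.Pairwise (· ≥ ·)) {i k : ℕ} (h : i ≤ k) :
    L.getD k 0 ≤ L.getD i 0 := by
  by_cases hk : k < L.length
  · have hi : i < L.length := lt_of_le_of_lt h hk
    rw [List.getD_eq_getElem _ _ hk, List.getD_eq_getElem _ _ hi]
    have := hs.rel_get_of_le (a := ⟨i, hi⟩) (b := ⟨k, hk⟩) h
    simpa [List.get_eq_getElem] using this
  · rw [List.getD_eq_default _ _ (le_of_not_gt hk)]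
    exact Nat.zero_le _

lemma bb_strict_anti {L : List ℕ} (hs : L.Pairwise (· ≥ ·)) {i k : ℕ}
    (hik : i < k) (hk : k < L.length) : bb L k < bb L i := by
  have h1 : L.getD k 0 ≤ L.getD i 0 := lam_anti hs (le_of_lt hik)
  unfold bb
  omega

lemma bb_lt_iff {L : List ℕ} (hs : L.Pairwise (· ≥ ·)) {i k : ℕ}
    (hi : i < L.length) (hk : k < L.length) : bb L k < bb L i ↔ i < k := by
  constructor
  · intro h
    by_contra hc
    rcases Nat.lt_or_ge i k with h' | h'
    · exact hc h'
    · rcases Nat.eq_or_lt_of_le h' with rfl | h''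
      · exact absurd h (lt_irrefl _)
      · exact absurd (bb_strict_anti hs h'' hi) (not_lt_of_gt h)
  · intro h; exact bb_strict_anti hs h hk

lemma bb_injOn {L : List ℕ} (hs : L.Pairwise (· ≥ ·)) :
    Set.InjOn (bb L) (Finset.range L.length) := by
  intro i hi k hk h
  simp only [coe_range, Set.mem_Iio] at hi hk
  by_contra hne
  rcases Nat.lt_or_ge i k with h' | h'
  · have := bb_strict_anti hs h' hk; omega
  · rcases Nat.eq_or_lt_of_le h' with h'' | h''
    · exact hne h''.symm
    · have := bb_strict_anti hs h'' hi; omega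

lemma betaSet_getD {L : List ℕ} {i : ℕ} (h : i < L.length) :
    (betaSet L).getD i 0 = bb L i := by
  have : i < (betaSet L).length := by simpa [betaSet] using h
  rw [List.getD_eq_getElem _ _ this]
  simp [betaSet, bb, h]
lemma card_below (d n : ℕ) (hd : 0 < d) :
    ((Finset.range n).filter (fun g => g % d = n % d)).card = n / d := by
  rw [← Finset.card_range (n / d)]
  symm
  apply Finset.card_nbij' (fun k => n % d + d * k) (fun g => g / d)
  · intro k hk
    simp only [Finset.coe_filter, Finset.coe_range, Set.mem_setOf_eq, Set.mem_Iio, Finset.mem_range, Finset.mem_filter] at *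
    constructor
    · have h1 : d * k < d * (n / d) := (Nat.mul_lt_mul_left hd).mpr hk
      have h2 : d * (n / d) + n % d = n := Nat.div_add_mod n d
      omega
    · simp [Nat.add_mul_mod_self_left, Nat.mod_mod_of_dvd, Nat.mod_self]
  · intro g hg
    simp only [Finset.coe_filter, Finset.coe_range, Set.mem_setOf_eq, Set.mem_Iio, Finset.mem_range, Finset.mem_filter] at *
    obtain ⟨hlt, hmod⟩ := hg
    have h1 : d * (g / d) + g % d = g := Nat.div_add_mod g d
    have h2 : d * (n / d) + n % d = n := Nat.div_add_mod n d
    have : d * (g / d) < d * (n / d) := by omega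
    exact lt_of_mul_lt_mul_left this (Nat.zero_le d)
  · intro k hk
    simp only [Finset.coe_range, Set.mem_Iio] at hk
    dsimp only
    rw [Nat.add_mul_div_left _ _ hd, Nat.div_eq_of_lt (Nat.mod_lt _ hd)]
    omega
  · intro g hg
    simp only [Finset.coe_filter, Finset.coe_range, Set.mem_setOf_eq, Set.mem_Iio] at hg
    have h1 : d * (g / d) + g % d = g := Nat.div_add_mod g d
    dsimp only
    omega

lemma sum_rank (S : Finset ℕ) (v : ℕ → ℕ) (hv : Set.InjOn v S) :
    ∑ i ∈ S, (S.filter (fun k => v k < v i)).card = (S.card).choose 2 := by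
  generalize hn : S.card = n
  induction n generalizing S with
  | zero =>
      rw [Finset.card_eq_zero] at hn
      subst hn; simp
  | succ n ih =>
      have hne : S.Nonempty := by
        rw [← Finset.card_pos, hn]; omega
      obtain ⟨i₀, hi₀, hmax⟩ := Finset.exists_max_image S v hne
      have hcard' : (S.erase i₀).card = n := by
        rw [Finset.card_erase_of_mem hi₀, hn]; omega
      rw [← Finset.sum_erase_add _ _ hi₀]
      have h1 : S.filter (fun k => v k < v i₀) = S.erase i₀ := by
        ext k
        simp only [Finset.mem_filter, Finset.mem_erase]
        constructor
        · rintro ⟨hk, hlt⟩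
          exact ⟨by rintro rfl; exact lt_irrefl _ hlt, hk⟩
        · rintro ⟨hne', hk⟩
          refine ⟨hk, lt_of_le_of_ne (hmax k hk) ?_⟩
          intro he
          exact hne' (hv hk hi₀ he)
      have h2 : ∀ i ∈ S.erase i₀,
          (S.filter (fun k => v k < v i)).card
            = ((S.erase i₀).filter (fun k => v k < v i)).card := by
        intro i hi
        congr 1
        ext k
        simp only [Finset.mem_filter, Finset.mem_erase]
        constructor
        · rintro ⟨hk, hlt⟩
          refine ⟨⟨?_, hk⟩, hlt⟩
          rintro rfl
          exact absurd (hmax i (Finset.mem_of_mem_erase hi)) (not_le_of_gt hlt)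
        · rintro ⟨⟨_, hk⟩, hlt⟩; exact ⟨hk, hlt⟩
      rw [Finset.sum_congr rfl h2, ih _ (hv.mono (by simp [Finset.erase_subset])) hcard',
        h1, hcard']
      have h := Nat.choose_succ_succ n 1
      simp [Nat.choose_one_right] at h
      omega

lemma sum_distinct_ge (S : Finset ℕ) : (S.card).choose 2 ≤ ∑ i ∈ S, i := by
  generalize hn : S.card = n
  induction n generalizing S with
  | zero => simp
  | succ n ih =>
      have hne : S.Nonempty := by rw [← Finset.card_pos, hn]; omega
      set M := S.max' hne with hM
      have hMmem : M ∈ S := S.max'_mem hne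
      have hcard' : (S.erase M).card = n := by rw [Finset.card_erase_of_mem hMmem, hn]; omega
      have hMbig : n ≤ M := by
        have hsub : S ⊆ Finset.range (M + 1) := by
          intro x hx
          simp only [Finset.mem_range]
          exact Nat.lt_succ_of_le (S.le_max' x hx)
        have := Finset.card_le_card hsub
        rw [hn, Finset.card_range] at this
        omega
      rw [← Finset.sum_erase_add _ _ hMmem]
      have := ih (S.erase M) hcard'
      have h := Nat.choose_succ_succ n 1
      simp [Nat.choose_one_right] at h
      omega
def Bimg (L : List ℕ) : Finset ℕ := (Finset.range L.length).image (bb L)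

def gg (L : List ℕ) (i j : ℕ) : ℕ :=
  j + ((Finset.range (L.length - (i+1))).filter (fun k => L.getD (i+1+k) 0 ≤ j)).card

def cc (d : ℕ) (L : List ℕ) (i : ℕ) : ℕ :=
  ((Finset.range L.length).filter
    (fun k => bb L k % d = bb L i % d ∧ bb L k < bb L i)).card

lemma hook_eq (L : List ℕ) (i j : ℕ) :
    hookLen L i j = (L.getD i 0 - j) +
      ((Finset.range (L.length - (i+1))).filter (fun k => j < L.getD (i+1+k) 0)).card := by
  unfold hookLen
  rw [length_filter_eq, List.length_drop, Finset.card_filter, Finset.card_filter]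
  congr 1
  apply Finset.sum_congr rfl
  intro k _
  simp [getD_drop]

lemma hook_pos {L : List ℕ} {i j : ℕ} (hj : j < L.getD i 0) : 0 < hookLen L i j := by
  unfold hookLen; omega

lemma hook_add_gg {L : List ℕ} {i j : ℕ} (hi : i < L.length) (hj : j < L.getD i 0) :
    hookLen L i j + gg L i j = bb L i := by
  rw [hook_eq]
  unfold gg bb
  have hsplit := Finset.card_filter_add_card_filter_not
    (s := Finset.range (L.length - (i+1))) (p := fun k => j < L.getD (i+1+k) 0)
  rw [Finset.card_range] at hsplit
  have heq : (Finset.range (L.length - (i+1))).filter (fun k => ¬ j < L.getD (i+1+k) 0)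
      = (Finset.range (L.length - (i+1))).filter (fun k => L.getD (i+1+k) 0 ≤ j) := by
    apply Finset.filter_congr; intro k _; simp
  rw [heq] at hsplit
  omega

lemma gg_lt {L : List ℕ} {i j : ℕ} (hi : i < L.length) (hj : j < L.getD i 0) :
    gg L i j < bb L i := by
  have h1 := hook_add_gg hi hj
  have h2 := hook_pos (L := L) (i := i) hj
  omega

lemma gg_strictMono {L : List ℕ} (hs : L.Pairwise (· ≥ ·)) {i j j' : ℕ} (h : j < j') :
    gg L i j < gg L i j' := by
  unfold gg
  have hsub : (Finset.range (L.length - (i+1))).filter (fun k => L.getD (i+1+k) 0 ≤ j)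
      ⊆ (Finset.range (L.length - (i+1))).filter (fun k => L.getD (i+1+k) 0 ≤ j') := by
    intro k hk
    simp only [Finset.mem_filter, Finset.mem_range] at *
    omega
  have := Finset.card_le_card hsub
  omega

lemma gg_not_bead {L : List ℕ} (hs : L.Pairwise (· ≥ ·)) {i j : ℕ}
    (hi : i < L.length) (hj : j < L.getD i 0) :
    ∀ k < L.length, bb L k ≠ gg L i j := by
  intro k hk
  set r := L.length with hr
  set N := r - (i + 1) with hN
  set F := (Finset.range N).filter (fun t => L.getD (i+1+t) 0 ≤ j) with hF
  have hgg : gg L i j = j + F.card := rfl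
  rcases Nat.lt_or_ge i k with hik | hik
  swap
  · -- k ≤ i : bb k ≥ bb i > gg
    have h1 : bb L i ≤ bb L k := by
      rcases Nat.eq_or_lt_of_le hik with rfl | hlt
      · exact le_refl _
      · exact le_of_lt (bb_strict_anti hs hlt hi)
    have h2 := gg_lt hi hj
    omega
  · set t := k - (i + 1) with ht
    have htN : t < N := by omega
    rcases Nat.lt_or_ge j (L.getD k 0) with hcase | hcase
    · -- j < lam k : bb k > gg
      have hFsub : F ⊆ Finset.Ico (t+1) N := by
        intro x hx
        simp only [hF, Finset.mem_filter, Finset.mem_range] at hx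
        simp only [Finset.mem_Ico]
        refine ⟨?_, hx.1⟩
        by_contra hc
        push_neg at hc
        have : L.getD k 0 ≤ L.getD (i+1+x) 0 := lam_anti hs (by omega)
        omega
      have hm : F.card ≤ N - t - 1 := by
        have := Finset.card_le_card hFsub
        rw [Nat.card_Ico] at this
        omega
      have : bb L k = L.getD k 0 + (r - 1 - k) := rfl
      omega
    · -- lam k ≤ j : bb k < gg
      have hFsup : Finset.Ico t N ⊆ F := by
        intro x hx
        simp only [Finset.mem_Ico] at hx
        simp only [hF, Finset.mem_filter, Finset.mem_range]
        refine ⟨hx.2, ?_⟩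
        have : L.getD (i+1+x) 0 ≤ L.getD k 0 := lam_anti hs (by omega)
        omega
      have hm : N - t ≤ F.card := by
        have := Finset.card_le_card hFsup
        rw [Nat.card_Ico] at this
        omega
      have : bb L k = L.getD k 0 + (r - 1 - k) := rfl
      omega

lemma beads_below {L : List ℕ} (hs : L.Pairwise (· ≥ ·)) {i : ℕ} (hi : i < L.length) :
    ((Finset.range (bb L i)).filter (fun g => g ∈ Bimg L)).card = L.length - 1 - i := by
  have himg : ((Finset.range L.length).filter (fun k => bb L k < bb L i)).image (bb L)
      = (Finset.range (bb L i)).filter (fun g => g ∈ Bimg L) := by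
    ext g
    simp only [Finset.mem_image, Finset.mem_filter, Finset.mem_range, Bimg]
    constructor
    · rintro ⟨k, ⟨hk, hlt⟩, rfl⟩
      exact ⟨hlt, k, hk, rfl⟩
    · rintro ⟨hlt, k, hk, rfl⟩
      exact ⟨k, ⟨hk, hlt⟩, rfl⟩
  have hinj : Set.InjOn (bb L) ((Finset.range L.length).filter (fun k => bb L k < bb L i)) := by
    refine (bb_injOn hs).mono ?_
    intro x hx
    simp only [Finset.coe_filter, Set.mem_setOf_eq] at hx
    simpa using hx.1
  rw [← himg, Finset.card_image_of_injOn hinj]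
  have : (Finset.range L.length).filter (fun k => bb L k < bb L i) = Finset.Ioo i L.length := by
    ext k
    simp only [Finset.mem_filter, Finset.mem_range, Finset.mem_Ioo]
    constructor
    · rintro ⟨hk, hlt⟩
      exact ⟨(bb_lt_iff hs hi hk).mp hlt, hk⟩
    · rintro ⟨h1, h2⟩
      exact ⟨h2, (bb_lt_iff hs hi h2).mpr h1⟩
  rw [this, Nat.card_Ioo]
  omega
lemma gg_image {L : List ℕ} (hs : L.Pairwise (· ≥ ·)) {i : ℕ} (hi : i < L.length) :
    (Finset.range (L.getD i 0)).image (gg L i)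
      = (Finset.range (bb L i)).filter (fun g => g ∉ Bimg L) := by
  apply Finset.eq_of_subset_of_card_le
  · intro g hg
    simp only [Finset.mem_image, Finset.mem_range] at hg
    obtain ⟨j, hj, rfl⟩ := hg
    simp only [Finset.mem_filter, Finset.mem_range]
    refine ⟨gg_lt hi hj, ?_⟩
    intro hmem
    simp only [Bimg, Finset.mem_image, Finset.mem_range] at hmem
    obtain ⟨k, hk, hkeq⟩ := hmem
    exact gg_not_bead hs hi hj k hk hkeq
  · have hinj : Set.InjOn (gg L i) (Finset.range (L.getD i 0)) := by
      intro a _ b _ hab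
      by_contra hne
      rcases Nat.lt_or_ge a b with h | h
      · exact absurd hab (Nat.ne_of_lt (gg_strictMono hs h))
      · rcases Nat.eq_or_lt_of_le h with h' | h'
        · exact hne h'.symm
        · exact absurd hab (Nat.ne_of_gt (gg_strictMono hs h'))
    rw [Finset.card_image_of_injOn hinj, Finset.card_range]
    have hsplit := Finset.card_filter_add_card_filter_not
      (s := Finset.range (bb L i)) (p := fun g => g ∈ Bimg L)
    rw [Finset.card_range, beads_below hs hi] at hsplit
    have hbb : bb L i = L.getD i 0 + (L.length - 1 - i) := rfl
    omega

lemma row_count {L : List ℕ} (hs : L.Pairwise (· ≥ ·)) {d i : ℕ} (hi : i < L.length) :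
    ((Finset.range (L.getD i 0)).filter (fun j => d ∣ hookLen L i j)).card
      = ((Finset.range (bb L i)).filter
          (fun g => g % d = bb L i % d ∧ g ∉ Bimg L)).card := by
  have h1 : (Finset.range (bb L i)).filter (fun g => g % d = bb L i % d ∧ g ∉ Bimg L)
      = ((Finset.range (bb L i)).filter (fun g => g ∉ Bimg L)).filter
          (fun g => g % d = bb L i % d) := by
    rw [Finset.filter_filter]
    apply Finset.filter_congr
    intro x _
    tauto
  rw [h1, ← gg_image hs hi, Finset.filter_image]
  have hinj : Set.InjOn (gg L i) ((Finset.range (L.getD i 0)).filter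
      (fun j => gg L i j % d = bb L i % d)) := by
    intro a ha b hb hab
    by_contra hne
    rcases Nat.lt_or_ge a b with h | h
    · exact absurd hab (Nat.ne_of_lt (gg_strictMono hs h))
    · rcases Nat.eq_or_lt_of_le h with h' | h'
      · exact hne h'.symm
      · exact absurd hab (Nat.ne_of_gt (gg_strictMono hs h'))
  rw [Finset.card_image_of_injOn hinj]
  rw [Finset.card_filter, Finset.card_filter]
  apply Finset.sum_congr rfl
  intro j hj
  simp only [Finset.mem_range] at hj
  have hadd := hook_add_gg hi hj
  have hle : gg L i j ≤ bb L i := by omega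
  have : (gg L i j ≡ bb L i [MOD d]) ↔ d ∣ bb L i - gg L i j := Nat.modEq_iff_dvd' hle
  have hsub : bb L i - gg L i j = hookLen L i j := by omega
  rw [hsub] at this
  unfold Nat.ModEq at this
  simp [this]
lemma bead_filter_image {L : List ℕ} (hs : L.Pairwise (· ≥ ·)) {d i : ℕ} (hi : i < L.length) :
    ((Finset.range L.length).filter
        (fun k => bb L k % d = bb L i % d ∧ bb L k < bb L i)).image (bb L)
      = ((Finset.range (bb L i)).filter (fun g => g % d = bb L i % d)).filter
          (fun g => g ∈ Bimg L) := by
  ext g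
  simp only [Finset.mem_image, Finset.mem_filter, Finset.mem_range, Bimg]
  constructor
  · rintro ⟨k, ⟨hk, hmod, hlt⟩, rfl⟩
    exact ⟨⟨hlt, hmod⟩, k, hk, rfl⟩
  · rintro ⟨⟨hlt, hmod⟩, k, hk, rfl⟩
    exact ⟨k, ⟨hk, hmod, hlt⟩, rfl⟩

lemma cc_le {L : List ℕ} (hs : L.Pairwise (· ≥ ·)) {d i : ℕ} (hd : 0 < d) (hi : i < L.length) :
    cc d L i ≤ bb L i / d := by
  rw [← card_below d (bb L i) hd]
  unfold cc
  apply Finset.card_le_card_of_injOn (bb L)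
  · intro k hk
    simp only [Finset.coe_filter, Finset.coe_range, Set.mem_setOf_eq, Set.mem_Iio, Finset.mem_filter, Finset.mem_range] at *
    exact ⟨hk.2.2, hk.2.1⟩
  · refine (bb_injOn hs).mono ?_
    intro x hx
    simp only [Finset.coe_filter, Set.mem_setOf_eq] at hx
    simpa using hx.1

lemma gap_count {L : List ℕ} (hs : L.Pairwise (· ≥ ·)) {d i : ℕ} (hd : 0 < d) (hi : i < L.length) :
    ((Finset.range (bb L i)).filter
        (fun g => g % d = bb L i % d ∧ g ∉ Bimg L)).card = bb L i / d - cc d L i := by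
  have hA := card_below d (bb L i) hd
  set A := (Finset.range (bb L i)).filter (fun g => g % d = bb L i % d) with hAdef
  have hsplit := Finset.card_filter_add_card_filter_not
    (s := A) (p := fun g => g ∈ Bimg L)
  have hin : (A.filter (fun g => g ∈ Bimg L)).card = cc d L i := by
    rw [← bead_filter_image hs hi]
    apply Finset.card_image_of_injOn
    refine (bb_injOn hs).mono ?_
    intro x hx
    simp only [Finset.coe_filter, Set.mem_setOf_eq] at hx
    simpa using hx.1
  have hout : A.filter (fun g => ¬ g ∈ Bimg L)
      = (Finset.range (bb L i)).filter (fun g => g % d = bb L i % d ∧ g ∉ Bimg L) := by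
    rw [hAdef, Finset.filter_filter]
  rw [← hout, ← hin] at *
  omega

lemma sum_cc {L : List ℕ} (hs : L.Pairwise (· ≥ ·)) {d : ℕ} (hd : 0 < d) :
    ∑ i ∈ Finset.range L.length, cc d L i
      = ∑ j ∈ Finset.range d,
          (((Finset.range L.length).filter (fun k => bb L k % d = j)).card).choose 2 := by
  rw [← Finset.sum_fiberwise_of_maps_to (g := fun i => bb L i % d) (t := Finset.range d)
    (fun i _ => Finset.mem_range.mpr (Nat.mod_lt _ hd)) (cc d L)]
  apply Finset.sum_congr rfl
  intro j hj
  rw [← sum_rank ((Finset.range L.length).filter (fun k => bb L k % d = j)) (bb L)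
    ((bb_injOn hs).mono (by
      intro x hx
      simp only [Finset.coe_filter, Set.mem_setOf_eq] at hx
      simpa using hx.1))]
  apply Finset.sum_congr rfl
  intro i hi
  simp only [Finset.mem_filter, Finset.mem_range] at hi
  unfold cc
  congr 1
  rw [Finset.filter_filter]
  apply Finset.filter_congr
  intro k _
  simp only [Finset.mem_filter, Finset.mem_range, hi.2]
lemma betaSet_sum_div (L : List ℕ) (d : ℕ) :
    ((betaSet L).map (· / d)).sum = ∑ i ∈ Finset.range L.length, bb L i / d := by
  unfold betaSet
  rw [List.map_map, sum_map_range]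
  apply Finset.sum_congr rfl
  intro i _
  simp [bb]

lemma betaSet_fiber_card (L : List ℕ) (d j : ℕ) :
    ((betaSet L).filter (fun b => b % d = j)).length
      = ((Finset.range L.length).filter (fun k => bb L k % d = j)).card := by
  rw [length_filter_eq]
  have hlen : (betaSet L).length = L.length := by simp [betaSet]
  rw [hlen, Finset.card_filter, Finset.card_filter]
  apply Finset.sum_congr rfl
  intro k hk
  simp only [Finset.mem_range] at hk
  simp only [betaSet_getD hk, decide_eq_true_eq]

lemma lWeight_eq (L : List ℕ) (d : ℕ) :
    lWeight d L = (∑ i ∈ Finset.range L.length, bb L i / d)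
      - ∑ j ∈ Finset.range d,
          (((Finset.range L.length).filter (fun k => bb L k % d = j)).card).choose 2 := by
  unfold lWeight
  rw [betaSet_sum_div]
  congr 1
  apply Finset.sum_congr rfl
  intro j _
  rw [betaSet_fiber_card]

lemma count_eq_weight {L : List ℕ} (hs : L.Pairwise (· ≥ ·)) {d : ℕ} (hd : 0 < d) :
    lWeight d L = ∑ i ∈ Finset.range L.length,
      ((Finset.range (L.getD i 0)).filter (fun j => d ∣ hookLen L i j)).card := by
  rw [lWeight_eq, ← sum_cc hs hd,
    ← Finset.sum_tsub_distrib _ (fun i hi => cc_le hs hd (Finset.mem_range.mp hi))]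
  apply Finset.sum_congr rfl
  intro i hi
  simp only [Finset.mem_range] at hi
  rw [row_count hs hi, gap_count hs hd hi]

lemma core_sum (d r : ℕ) (hd : 0 < d) (m : ℕ → ℕ) (hr : ∑ j ∈ Finset.range d, m j = r) :
    r.choose 2 ≤ ∑ j ∈ Finset.range d, (j * m j + d * (m j).choose 2) := by
  set CB := (Finset.range d).biUnion
    (fun j => (Finset.range (m j)).image (fun k => j + d * k)) with hCB
  have hmod : ∀ j ∈ Finset.range d, ∀ g ∈ (Finset.range (m j)).image (fun k => j + d * k),
      g % d = j := by
    intro j hj g hg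
    simp only [Finset.mem_image, Finset.mem_range] at hg hj
    obtain ⟨k, _, rfl⟩ := hg
    rw [Nat.add_mul_mod_self_left, Nat.mod_eq_of_lt hj]
  have hdisj : ∀ x ∈ Finset.range d, ∀ y ∈ Finset.range d, x ≠ y →
      Disjoint ((Finset.range (m x)).image (fun k => x + d * k))
        ((Finset.range (m y)).image (fun k => y + d * k)) := by
    intro x hx y hy hxy
    rw [Finset.disjoint_left]
    intro g hgx hgy
    exact hxy ((hmod x hx g hgx).symm.trans (hmod y hy g hgy))
  have hinj : ∀ j : ℕ, Set.InjOn (fun k => j + d * k) (Finset.range (m j)) := by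
    intro j a _ b _ hab
    simp only at hab
    exact Nat.eq_of_mul_eq_mul_left hd (add_left_cancel hab)
  have hcard : CB.card = r := by
    rw [hCB, Finset.card_biUnion hdisj, ← hr]
    apply Finset.sum_congr rfl
    intro j _
    rw [Finset.card_image_of_injOn (hinj j), Finset.card_range]
  have hsum : ∑ g ∈ CB, g = ∑ j ∈ Finset.range d, (j * m j + d * (m j).choose 2) := by
    rw [hCB, Finset.sum_biUnion (by
      intro x hx y hy hxy
      exact hdisj x (by simpa using hx) y (by simpa using hy) hxy)]
    apply Finset.sum_congr rfl
    intro j _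
    rw [Finset.sum_image (fun a ha b hb hab => hinj j (by simpa using ha) (by simpa using hb) hab)]
    rw [Finset.sum_add_distrib, Finset.sum_const, Finset.card_range, smul_eq_mul,
      ← Finset.mul_sum, Finset.sum_range_id, Nat.choose_two_right, mul_comm (m j) j]
  calc r.choose 2 = (CB.card).choose 2 := by rw [hcard]
    _ ≤ ∑ g ∈ CB, g := sum_distinct_ge CB
    _ = _ := hsum

lemma weight_bound {L : List ℕ} (hs : L.Pairwise (· ≥ ·)) {d : ℕ} (hd : 0 < d) :
    d * lWeight d L ≤ L.sum := by
  set r := L.length with hrdef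
  set m : ℕ → ℕ := fun j => ((Finset.range r).filter (fun k => bb L k % d = j)).card with hm
  have hmaps : ∀ i ∈ Finset.range r, bb L i % d ∈ Finset.range d :=
    fun i _ => Finset.mem_range.mpr (Nat.mod_lt _ hd)
  have hr : ∑ j ∈ Finset.range d, m j = r := by
    have := Finset.card_eq_sum_card_fiberwise hmaps
    rw [Finset.card_range] at this
    exact this.symm
  have hMfib : ∑ i ∈ Finset.range r, bb L i % d = ∑ j ∈ Finset.range d, j * m j := by
    rw [← Finset.sum_fiberwise_of_maps_to hmaps (fun i => bb L i % d)]
    apply Finset.sum_congr rfl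
    intro j _
    rw [Finset.sum_congr rfl (fun i hi => (Finset.mem_filter.mp hi).2), Finset.sum_const,
      smul_eq_mul, mul_comm]
  have hcore := core_sum d r hd m hr
  rw [Finset.sum_add_distrib, ← Finset.mul_sum, ← hMfib] at hcore
  have hsumbb : ∑ i ∈ Finset.range r, bb L i = L.sum + r.choose 2 := by
    unfold bb
    rw [Finset.sum_add_distrib, list_sum_eq]
    congr 1
    rw [show ∑ i ∈ Finset.range r, (L.length - 1 - i) = ∑ i ∈ Finset.range r, (r - 1 - i) from rfl,
      Finset.sum_range_reflect (fun i => i) r, Finset.sum_range_id, Nat.choose_two_right]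
  have hdq : d * (∑ i ∈ Finset.range r, bb L i / d)
      = ∑ i ∈ Finset.range r, bb L i - ∑ i ∈ Finset.range r, bb L i % d := by
    rw [Finset.mul_sum, ← Finset.sum_tsub_distrib _ (fun i _ => Nat.mod_le _ _)]
    apply Finset.sum_congr rfl
    intro i _
    have := Nat.div_add_mod (bb L i) d
    omega
  have hmodle : ∑ i ∈ Finset.range r, bb L i % d ≤ ∑ i ∈ Finset.range r, bb L i :=
    Finset.sum_le_sum (fun i _ => Nat.mod_le _ _)
  have hW := lWeight_eq L d
  have hccq : ∑ j ∈ Finset.range d, (m j).choose 2 ≤ ∑ i ∈ Finset.range r, bb L i / d := by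
    rw [← sum_cc hs hd]
    exact Finset.sum_le_sum (fun i hi => cc_le hs hd (Finset.mem_range.mp hi))
  obtain ⟨t, ht⟩ := Nat.le.dest hccq
  simp only [hm] at hcore hccq ht
  simp only [← hrdef] at hW
  have hWt : lWeight d L = t := by omega
  have hdt : d * (∑ j ∈ Finset.range d, (m j).choose 2) + d * t
      = d * (∑ i ∈ Finset.range r, bb L i / d) := by
    rw [← Nat.mul_add, ht]
  simp only [hm] at hdt
  rw [hWt]
  omega
lemma sum_range_split (f : ℕ → ℕ) (a b : ℕ) :
    ∑ k ∈ Finset.range (a+b), f k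
      = ∑ k ∈ Finset.range a, f k + ∑ k ∈ Finset.range b, f (a+k) := by
  induction b with
  | zero => simp
  | succ b ih =>
      rw [show a + (b+1) = (a+b)+1 from rfl, Finset.sum_range_succ, ih,
        Finset.sum_range_succ]
      omega

lemma tInt_eq (m : ℕ) (hm : 0 < m) :
    tInt m = ∏ e ∈ m.divisors.erase 1, cyclotomic e ℚ := by
  have h1 : tInt m * (X - 1) = X ^ m - 1 := geom_sum_mul X m
  have h2 : ∏ e ∈ m.divisors, cyclotomic e ℚ = X ^ m - 1 :=
    prod_cyclotomic_eq_X_pow_sub_one hm ℚ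
  have h3 : m.divisors = insert 1 (m.divisors.erase 1) :=
    (Finset.insert_erase (Nat.one_mem_divisors.mpr hm.ne')).symm
  rw [h3, Finset.prod_insert (Finset.notMem_erase _ _), cyclotomic_one] at h2
  have hX : (X - 1 : Polynomial ℚ) ≠ 0 := by
    intro h
    have := congrArg (eval 0) h
    simp at this
  apply mul_left_cancel₀ hX
  rw [mul_comm (X - 1 : Polynomial ℚ) (tInt m), h1]
  exact h2.symm

lemma card_range_dvd_succ (n e : ℕ) :
    ((Finset.range n).filter (fun i => e ∣ (i+1))).card = n / e := by
  rw [← Nat.Ioc_filter_dvd_card_eq_div]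
  apply Finset.card_nbij' (fun i => i + 1) (fun x => x - 1)
  · intro a ha
    simp only [Finset.coe_filter, Finset.coe_range, Finset.coe_Ioc, Set.mem_setOf_eq, Set.mem_Iio, Set.mem_Ioc, Finset.mem_filter, Finset.mem_range, Finset.mem_Ioc] at *
    omega
  · intro a ha
    simp only [Finset.coe_filter, Finset.coe_range, Finset.coe_Ioc, Set.mem_setOf_eq, Set.mem_Iio, Set.mem_Ioc, Finset.mem_filter, Finset.mem_range, Finset.mem_Ioc] at *
    obtain ⟨⟨h1, h2⟩, h3⟩ := ha
    constructor
    · omega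
    · have : a - 1 + 1 = a := by omega
      rw [this]; exact h3
  · intro a _; rfl
  · intro a ha
    simp only [Finset.coe_filter, Finset.coe_Ioc, Set.mem_setOf_eq, Set.mem_Ioc, Finset.mem_filter, Finset.mem_Ioc] at ha
    dsimp only
    omega

lemma prod_tInt {ι : Type*} (A : Finset ι) (v : ι → ℕ) (N : ℕ)
    (h1 : ∀ a ∈ A, 0 < v a) (h2 : ∀ a ∈ A, v a ≤ N) :
    ∏ a ∈ A, tInt (v a)
      = ∏ e ∈ Finset.Icc 2 N, cyclotomic e ℚ ^ (A.filter (fun a => e ∣ v a)).card := by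
  rw [Finset.prod_congr rfl (fun a ha => tInt_eq _ (h1 a ha))]
  rw [Finset.prod_comm' (s := A) (t := fun a => (v a).divisors.erase 1)
    (t' := Finset.Icc 2 N) (s' := fun e => A.filter (fun a => e ∣ v a))
    (f := fun _ e => cyclotomic e ℚ) ?_]
  · exact Finset.prod_congr rfl (fun e _ => Finset.prod_const _)
  · intro a e
    simp only [Finset.mem_erase, Nat.mem_divisors, Finset.mem_filter, Finset.mem_Icc]
    constructor
    · rintro ⟨ha, hne, hdvd, hne0⟩
      have he0 : e ≠ 0 := by rintro rfl; exact hne0 (Nat.eq_zero_of_zero_dvd hdvd)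
      have := Nat.le_of_dvd (Nat.pos_of_ne_zero hne0) hdvd
      have := h2 a ha
      exact ⟨⟨ha, hdvd⟩, by omega, by omega⟩
    · rintro ⟨⟨ha, hdvd⟩, h2e, heN⟩
      exact ⟨ha, by omega, hdvd, (h1 a ha).ne'⟩

lemma sigma_filter_card (r : ℕ) (lam : ℕ → ℕ) (p : ℕ → ℕ → Prop) [DecidablePred fun x : (_ : ℕ) × ℕ => p x.1 x.2]
    [∀ i, DecidablePred (p i)] :
    (((Finset.range r).sigma (fun i => Finset.range (lam i))).filter
        (fun x => p x.1 x.2)).card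
      = ∑ i ∈ Finset.range r, ((Finset.range (lam i)).filter (p i)).card := by
  rw [show ((Finset.range r).sigma (fun i => Finset.range (lam i))).filter
        (fun x => p x.1 x.2)
      = (Finset.range r).sigma (fun i => (Finset.range (lam i)).filter (p i)) by
    ext ⟨i, j⟩
    simp only [Finset.mem_filter, Finset.mem_sigma]
    tauto]
  rw [Finset.card_sigma]

lemma hook_le {L : List ℕ} {i j : ℕ} (hi : i < L.length) : hookLen L i j ≤ L.sum := by
  rw [hook_eq]
  have hcnt : ((Finset.range (L.length - (i+1))).filter (fun k => j < L.getD (i+1+k) 0)).card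
      ≤ ∑ k ∈ Finset.range (L.length - (i+1)), L.getD (i+1+k) 0 := by
    calc ((Finset.range (L.length - (i+1))).filter (fun k => j < L.getD (i+1+k) 0)).card
        = ∑ k ∈ (Finset.range (L.length - (i+1))).filter (fun k => j < L.getD (i+1+k) 0), 1 :=
          Finset.card_eq_sum_ones _
      _ ≤ ∑ k ∈ (Finset.range (L.length - (i+1))).filter (fun k => j < L.getD (i+1+k) 0),
            L.getD (i+1+k) 0 := by
          apply Finset.sum_le_sum
          intro k hk
          have := (Finset.mem_filter.mp hk).2
          omega
      _ ≤ _ := Finset.sum_le_sum_of_subset (Finset.filter_subset _ _)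
  have hsplit : ∑ k ∈ Finset.range L.length, L.getD k 0
      = ∑ k ∈ Finset.range (i+1), L.getD k 0
        + ∑ k ∈ Finset.range (L.length - (i+1)), L.getD (i+1+k) 0 := by
    conv_lhs => rw [show L.length = (i+1) + (L.length - (i+1)) from by omega]
    exact sum_range_split _ _ _
  have hlam : L.getD i 0 ≤ ∑ k ∈ Finset.range (i+1), L.getD k 0 :=
    Finset.single_le_sum (f := fun k => L.getD k 0) (fun k _ => Nat.zero_le _)
      (Finset.self_mem_range_succ i)
  have hLs := list_sum_eq L
  omega
/-- The graded dimension `dim_t S^λ = (∏_{i=1}^n [i]_t) / (∏_{c} [h_c]_t)` is a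
polynomial, and for every `l ≥ 2` the multiplicity of the `l`-th cyclotomic
polynomial in it is exactly `⌊n/l⌋ - wt_l(λ)`, a nonnegative integer. -/
theorem statement3 (n : ℕ) (L : List ℕ) (hsorted : L.Pairwise (· ≥ ·))
    (hpos : ∀ a ∈ L, 0 < a) (hsum : L.sum = n) (l : ℕ) (hl : 2 ≤ l) :
    lWeight l L ≤ n / l ∧
    ∃ P : Polynomial ℚ,
      (∏ i ∈ Finset.range n, tInt (i + 1)) =
        (∏ i ∈ Finset.range L.length, ∏ j ∈ Finset.range (L.getD i 0),
          tInt (hookLen L i j)) * P ∧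
      (cyclotomic l ℚ) ^ (n / l - lWeight l L) ∣ P ∧
      ¬ (cyclotomic l ℚ) ^ (n / l - lWeight l L + 1) ∣ P := by
  subst hsum
  have hl1 : 0 < l := by omega
  have hwb := weight_bound hsorted hl1
  have hle : lWeight l L ≤ L.sum / l := (Nat.le_div_iff_mul_le hl1).mpr (by rw [Nat.mul_comm]; exact hwb)
  refine ⟨hle, ∏ e ∈ Finset.Icc 2 L.sum, cyclotomic e ℚ ^ (L.sum / e - lWeight e L),
    ?_, ?_, ?_⟩
  · -- the product identity
    have hlhs : (∏ i ∈ Finset.range L.sum, tInt (i + 1))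
        = ∏ e ∈ Finset.Icc 2 L.sum, cyclotomic e ℚ ^ (L.sum / e) := by
      rw [prod_tInt (Finset.range L.sum) (fun i => i + 1) L.sum
        (fun a _ => Nat.succ_pos a)
        (fun a ha => by have := Finset.mem_range.mp ha; show a + 1 ≤ L.sum; omega)]
      exact Finset.prod_congr rfl (fun e _ => by rw [card_range_dvd_succ])
    have hhook : (∏ i ∈ Finset.range L.length, ∏ j ∈ Finset.range (L.getD i 0),
          tInt (hookLen L i j))
        = ∏ e ∈ Finset.Icc 2 L.sum, cyclotomic e ℚ ^ (lWeight e L) := by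
      have hsig : (∏ i ∈ Finset.range L.length, ∏ j ∈ Finset.range (L.getD i 0),
            tInt (hookLen L i j))
          = ∏ x ∈ (Finset.range L.length).sigma (fun i => Finset.range (L.getD i 0)),
              tInt (hookLen L x.1 x.2) :=
        (Finset.prod_sigma (Finset.range L.length) (fun i => Finset.range (L.getD i 0))
          (fun x => tInt (hookLen L x.1 x.2))).symm
      rw [hsig, prod_tInt _ (fun x : (_ : ℕ) × ℕ => hookLen L x.1 x.2) L.sum
        (fun x hx => hook_pos (Finset.mem_range.mp (Finset.mem_sigma.mp hx).2))
        (fun x hx => hook_le (Finset.mem_range.mp (Finset.mem_sigma.mp hx).1))]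
      apply Finset.prod_congr rfl
      intro e he
      have he2 : 0 < e := by
        have := (Finset.mem_Icc.mp he).1; omega
      congr 1
      rw [sigma_filter_card L.length (fun i => L.getD i 0) (fun i j => e ∣ hookLen L i j)]
      exact (count_eq_weight hsorted he2).symm
    rw [hlhs, hhook, ← Finset.prod_mul_distrib]
    apply Finset.prod_congr rfl
    intro e he
    rw [← pow_add]
    congr 1
    have he2 : 0 < e := by have := (Finset.mem_Icc.mp he).1; omega
    have hwb' := weight_bound hsorted he2
    have : lWeight e L ≤ L.sum / e := (Nat.le_div_iff_mul_le he2).mpr (by rw [Nat.mul_comm]; exact hwb')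
    omega
  · -- divisibility
    by_cases hln : l ≤ L.sum
    · exact Finset.dvd_prod_of_mem _ (Finset.mem_Icc.mpr ⟨hl, hln⟩)
    · have h0 : L.sum / l = 0 := Nat.div_eq_of_lt (by omega)
      rw [h0, Nat.zero_sub, pow_zero]
      exact one_dvd _
  · -- non-divisibility
    have hprime : Prime (cyclotomic l ℚ) := (cyclotomic.irreducible_rat hl1).prime
    have hndvd : ∀ e k : ℕ, 0 < e → e ≠ l → ¬ (cyclotomic l ℚ ∣ cyclotomic e ℚ ^ k) := by
      intro e k he hne hdvd
      have h1 : cyclotomic l ℚ ∣ cyclotomic e ℚ := hprime.dvd_of_dvd_pow hdvd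
      have h2 : Associated (cyclotomic l ℚ) (cyclotomic e ℚ) :=
        (cyclotomic.irreducible_rat hl1).associated_of_dvd
          (cyclotomic.irreducible_rat he) h1
      have h3 : cyclotomic l ℚ = cyclotomic e ℚ :=
        Polynomial.eq_of_monic_of_associated (cyclotomic.monic l ℚ) (cyclotomic.monic e ℚ) h2
      exact hne ((cyclotomic_injective (R := ℚ) h3).symm)
    intro hdvd
    by_cases hln : l ≤ L.sum
    · have hmem : l ∈ Finset.Icc 2 L.sum := Finset.mem_Icc.mpr ⟨hl, hln⟩
      rw [← Finset.mul_prod_erase _ _ hmem] at hdvd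
      have hQ : cyclotomic l ℚ ∣
          ∏ e ∈ (Finset.Icc 2 L.sum).erase l, cyclotomic e ℚ ^ (L.sum / e - lWeight e L) := by
        have hpow : cyclotomic l ℚ ^ (L.sum / l - lWeight l L) * cyclotomic l ℚ ∣
            cyclotomic l ℚ ^ (L.sum / l - lWeight l L) *
              ∏ e ∈ (Finset.Icc 2 L.sum).erase l,
                cyclotomic e ℚ ^ (L.sum / e - lWeight e L) := by
          rw [← pow_succ]; exact hdvd
        exact (mul_dvd_mul_iff_left
          (pow_ne_zero _ (cyclotomic_ne_zero l ℚ))).mp hpow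
      obtain ⟨e, he, hce⟩ := hprime.exists_mem_finset_dvd hQ
      have hne : e ≠ l := (Finset.mem_erase.mp he).1
      have he2 : 2 ≤ e := (Finset.mem_Icc.mp (Finset.mem_erase.mp he).2).1
      exact hndvd e _ (by omega) hne hce
    · have h0 : L.sum / l = 0 := Nat.div_eq_of_lt (by omega)
      rw [h0, Nat.zero_sub, pow_one] at hdvd
      obtain ⟨e, he, hce⟩ := hprime.exists_mem_finset_dvd hdvd
      have he' := Finset.mem_Icc.mp he
      exact hndvd e _ (by omega) (by omega) hce
end
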